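/- Let m = C > n+1. If Φ is the C × m ReLU interpolation matrix of a three-layer network on C data points and there exist k ≥ n+2 columns of Φ all of whose entries are strictly positive, then Φ is singular. Hence a necessary condition for Φ to be nonsingular is that no n+2 columns of Φ are entirely positive. -/
import Mathlib


open Matrix

theorem stmt_1 (n m : ℕ) (hm : m > n + 1)
    (lam z : Fin m → (Fin (n + 1) → ℝ))
    (Φ : Matrix (Fin m) (Fin m) ℝ)
    (hΦ : ∀ k ν, Φ k ν = max 0 (lam ν ⬝ᵥ z k))
    (S : Finset (Fin m)) (hS : n + 2 ≤ S.card)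
    (hpos : ∀ ν ∈ S, ∀ k, 0 < lam ν ⬝ᵥ z k) :
    Φ.det = 0 := by
  -- the family (lam ν)_{ν ∈ S} is not linearly independent
  have hnli : ¬ LinearIndependent ℝ (fun ν : S => lam ν) := by
    intro h
    have hcard := h.fintype_card_le_finrank
    simp [Module.finrank_fintype_fun_eq_card] at hcard
    omega
  rw [Fintype.not_linearIndependent_iff] at hnli
  obtain ⟨g, hg, i0, hgi0⟩ := hnli
  rw [Finset.univ_eq_attach] at hg
  -- build the null vector
  set v : Fin m → ℝ := fun ν => if h : ν ∈ S then g ⟨ν, h⟩ else 0 with hv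
  rw [← Matrix.exists_mulVec_eq_zero_iff]
  refine ⟨v, ?_, ?_⟩
  · intro hv0
    apply hgi0
    have := congrFun hv0 (i0 : Fin m)
    simpa [hv, i0.2] using this
  · funext k
    have hΦS : ∀ ν ∈ S, Φ k ν = lam ν ⬝ᵥ z k := fun ν hν => by
      rw [hΦ]; exact max_eq_right (le_of_lt (hpos ν hν k))
    have h1 : Φ.mulVec v k = ∑ ν ∈ S.attach, g ν * (lam ν ⬝ᵥ z k) := by
      rw [Matrix.mulVec, dotProduct,
        ← Finset.sum_subset (Finset.subset_univ S) (fun ν _ hν => by simp [hv, hν]),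
        ← Finset.sum_attach S fun ν => Φ k ν * v ν]
      refine Finset.sum_congr rfl fun ν _ => ?_
      rw [hΦS ν ν.2]
      simp [hv, ν.2]
      ring
    have h2 : ∀ i, ∑ ν ∈ S.attach, g ν * lam ν i = 0 := fun i => by
      have := congrFun hg i
      simpa using this
    rw [h1]
    simp only [dotProduct, Finset.mul_sum]
    rw [Finset.sum_comm]
    refine (Finset.sum_eq_zero fun i _ => ?_).trans (by simp)
    simp only [← mul_assoc]
    rw [← Finset.sum_mul, h2, zero_mul]
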